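/- For every fixed complex number x, lim_{n→∞} (−1)^n·q^{n/2}·P̃_n(x;p,q) = c(x), where c(x) = q^{−1/4}·((1−q)/(1−p))·√((p;q)_∞/(q;q)_∞)·∑_{k=0}^∞ (q^{k²+k/2}/((pq;q)_k·(q;q)_k))·(−q·x)^k. -/

import Mathlib

set_option linter.unusedSectionVars false

/-- Finite q-shifted factorial `(z;q)_n`. -/
noncomputable def qp (z q : ℝ) (n : ℕ) : ℝ := ∏ k ∈ Finset.range n, (1 - z * q ^ k)
/-- Infinite q-shifted factorial `(z;q)_∞`. -/
noncomputable def qpInf (z q : ℝ) : ℝ := ∏' k : ℕ, (1 - z * q ^ k)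

open Filter Real

section basics
variable {z q : ℝ} (hz0 : 0 ≤ z) (hz1 : z < 1) (hq0 : 0 < q) (hq1 : q < 1)

include hz0 hz1 hq0 hq1

lemma factor_pos (k : ℕ) : 0 < 1 - z * q ^ k := by
  have h1 : q ^ k ≤ 1 := pow_le_one₀ hq0.le hq1.le
  nlinarith [pow_pos hq0 k]

lemma factor_le_one (k : ℕ) : 1 - z * q ^ k ≤ 1 := by
  nlinarith [pow_pos hq0 k]

lemma qp_pos (n : ℕ) : 0 < qp z q n :=
  Finset.prod_pos fun k _ => factor_pos hz0 hz1 hq0 hq1 k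

lemma qp_le_one (n : ℕ) : qp z q n ≤ 1 :=
  Finset.prod_le_one (fun k _ => (factor_pos hz0 hz1 hq0 hq1 k).le)
    (fun k _ => factor_le_one hz0 hz1 hq0 hq1 k)

lemma qp_anti : Antitone (qp z q) := by
  apply antitone_nat_of_succ_le
  intro n
  have := factor_le_one hz0 hz1 hq0 hq1 n
  have := factor_pos hz0 hz1 hq0 hq1 n
  have := qp_pos hz0 hz1 hq0 hq1 n
  calc qp z q (n+1) = qp z q n * (1 - z * q ^ n) := Finset.prod_range_succ _ _
    _ ≤ qp z q n * 1 := by nlinarith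
    _ = qp z q n := mul_one _

lemma summable_log : Summable (fun k => Real.log (1 - z * q ^ k)) := by
  apply Summable.of_norm_bounded (g := fun k => (1 - z)⁻¹ * (z * q ^ k))
  · exact ((summable_geometric_of_lt_one hq0.le hq1).mul_left z).mul_left _
  · intro k
    have hk1 : q ^ k ≤ 1 := pow_le_one₀ hq0.le hq1.le
    have hkp : 0 < q ^ k := pow_pos hq0 k
    have ht0 : 0 ≤ z * q ^ k := mul_nonneg hz0 hkp.le
    have ht1 : z * q ^ k ≤ z := by nlinarith
    have hpos : 0 < 1 - z * q ^ k := factor_pos hz0 hz1 hq0 hq1 k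
    have h1 : Real.log (1 - z * q ^ k) ≤ 0 := Real.log_nonpos (by linarith) (by linarith)
    have h2 : -Real.log (1 - z * q ^ k) = Real.log (1 - z * q ^ k)⁻¹ := (Real.log_inv _).symm
    have h3 : Real.log (1 - z * q ^ k)⁻¹ ≤ (1 - z * q ^ k)⁻¹ - 1 :=
      Real.log_le_sub_one_of_pos (inv_pos.2 hpos)
    have h4 : (1 - z * q ^ k)⁻¹ - 1 = (z * q ^ k) / (1 - z * q ^ k) := by
      field_simp
      ring
    rw [Real.norm_eq_abs, abs_of_nonpos h1]
    rw [h2]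
    refine h3.trans ?_
    have h5 : (1 - z)⁻¹ * (z * q ^ k) = (z * q ^ k) / (1 - z) := by ring
    rw [h4, h5, div_le_div_iff₀ hpos (by linarith : (0:ℝ) < 1 - z)]
    nlinarith

lemma mult : Multipliable (fun k => 1 - z * q ^ k) := by
  have := Real.multipliable_of_summable_log (fun k => factor_pos hz0 hz1 hq0 hq1 k)
    (summable_log hz0 hz1 hq0 hq1)
  exact this

lemma tendsto_qp : Tendsto (qp z q) atTop (nhds (qpInf z q)) :=
  (mult hz0 hz1 hq0 hq1).hasProd.tendsto_prod_nat

lemma qpInf_le_qp (n : ℕ) : qpInf z q ≤ qp z q n := by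
  refine le_of_tendsto (tendsto_qp hz0 hz1 hq0 hq1) ?_
  filter_upwards [eventually_ge_atTop n] with m hm
  exact qp_anti hz0 hz1 hq0 hq1 hm

lemma qpInf_le_one : qpInf z q ≤ 1 := by
  simpa [qp] using qpInf_le_qp hz0 hz1 hq0 hq1 0

lemma qp_bounds (n : ℕ) :
    1 - z * ∑ k ∈ Finset.range n, q ^ k ≤ qp z q n ∧
      qp z q n ≤ 1 - z * ∑ k ∈ Finset.range n, q ^ k + (z * ∑ k ∈ Finset.range n, q ^ k) ^ 2 := by
  induction n with
  | zero => simp [qp]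
  | succ n ih =>
    obtain ⟨ih1, ih2⟩ := ih
    have hP : 0 < qp z q n := qp_pos hz0 hz1 hq0 hq1 n
    have ha0 : 0 ≤ z * q ^ n := mul_nonneg hz0 (pow_pos hq0 n).le
    have ha1 : z * q ^ n ≤ 1 := by have := factor_pos hz0 hz1 hq0 hq1 n; linarith
    have hS : 0 ≤ z * ∑ k ∈ Finset.range n, q ^ k :=
      mul_nonneg hz0 (Finset.sum_nonneg fun k _ => (pow_pos hq0 k).le)
    rw [qp, Finset.prod_range_succ, Finset.sum_range_succ, ← qp]
    constructor
    · nlinarith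
    · nlinarith

lemma qpInf_bounds : 1 - z / (1 - q) ≤ qpInf z q ∧
    qpInf z q ≤ 1 - z / (1 - q) + (z / (1 - q)) ^ 2 := by
  have hgeo : Tendsto (fun n => ∑ k ∈ Finset.range n, q ^ k) atTop (nhds (1 - q)⁻¹) :=
    (hasSum_geometric_of_lt_one hq0.le hq1).tendsto_sum_nat
  have hzq : z / (1 - q) = z * (1 - q)⁻¹ := div_eq_mul_inv _ _
  have hlow : Tendsto (fun n => 1 - z * ∑ k ∈ Finset.range n, q ^ k) atTop
      (nhds (1 - z / (1 - q))) := by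
    rw [hzq]
    exact (tendsto_const_nhds.sub (hgeo.const_mul z))
  have hhigh : Tendsto (fun n => 1 - z * ∑ k ∈ Finset.range n, q ^ k
      + (z * ∑ k ∈ Finset.range n, q ^ k) ^ 2) atTop
      (nhds (1 - z / (1 - q) + (z / (1 - q)) ^ 2)) := by
    rw [hzq]
    exact (tendsto_const_nhds.sub (hgeo.const_mul z)).add ((hgeo.const_mul z).pow 2)
  constructor
  · exact le_of_tendsto_of_tendsto' hlow (tendsto_qp hz0 hz1 hq0 hq1)
      fun n => (qp_bounds hz0 hz1 hq0 hq1 n).1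
  · exact le_of_tendsto_of_tendsto' (tendsto_qp hz0 hz1 hq0 hq1) hhigh
      fun n => (qp_bounds hz0 hz1 hq0 hq1 n).2

end basics

section split
variable {z q : ℝ} (hz0 : 0 ≤ z) (hz1 : z < 1) (hq0 : 0 < q) (hq1 : q < 1)
include hz0 hz1 hq0 hq1

lemma zqm0 (m : ℕ) : 0 ≤ z * q ^ m := mul_nonneg hz0 (pow_pos hq0 m).le

lemma zqm1 (m : ℕ) : z * q ^ m < 1 := by
  have h1 : q ^ m ≤ 1 := pow_le_one₀ hq0.le hq1.le
  nlinarith [pow_pos hq0 m]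

lemma qp_split (m l : ℕ) : qp z q (m + l) = qp z q m * qp (z * q ^ m) q l := by
  rw [qp, Finset.prod_range_add, qp, qp]
  congr 1
  refine Finset.prod_congr rfl fun k _ => ?_
  rw [pow_add]
  ring

lemma qpInf_split (m : ℕ) : qpInf z q = qp z q m * qpInf (z * q ^ m) q := by
  have h1 : Tendsto (fun l => qp z q (m + l)) atTop (nhds (qpInf z q)) :=
    (tendsto_qp hz0 hz1 hq0 hq1).comp (tendsto_add_atTop_nat m |>.congr (fun n => by ring_nf))
  have h2 : Tendsto (fun l => qp z q m * qp (z * q ^ m) q l) atTop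
      (nhds (qp z q m * qpInf (z * q ^ m) q)) :=
    (tendsto_qp (zqm0 hz0 hz1 hq0 hq1 m) (zqm1 hz0 hz1 hq0 hq1 m) hq0 hq1).const_mul _
  exact tendsto_nhds_unique (h1.congr fun l => qp_split hz0 hz1 hq0 hq1 m l) h2

lemma qpInf_pos : 0 < qpInf z q := by
  obtain ⟨m, hm⟩ : ∃ m : ℕ, q ^ m < (1 - q) / (z + 1) := by
    have : Tendsto (fun m : ℕ => q ^ m) atTop (nhds 0) :=
      tendsto_pow_atTop_nhds_zero_of_lt_one hq0.le hq1
    exact ((this.eventually (eventually_lt_nhds (div_pos (by linarith) (by linarith)))).exists)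
  rw [qpInf_split hz0 hz1 hq0 hq1 m]
  have hb := (qpInf_bounds (zqm0 hz0 hz1 hq0 hq1 m) (zqm1 hz0 hz1 hq0 hq1 m) hq0 hq1).1
  have hq' : (0:ℝ) < 1 - q := by linarith
  have : z * q ^ m / (1 - q) < 1 := by
    rw [div_lt_one hq']
    calc z * q ^ m ≤ z * ((1-q)/(z+1)) := by nlinarith [pow_pos hq0 m]
      _ < 1 - q := by
        have hz1' : (0:ℝ) < z + 1 := by linarith
        rw [mul_comm, div_mul_eq_mul_div, div_lt_iff₀ hz1']
        nlinarith
  have := qp_pos hz0 hz1 hq0 hq1 m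
  nlinarith

end split

lemma qpInf_anti {z z' q : ℝ} (hz0 : 0 ≤ z) (hzz : z ≤ z') (hz1 : z' < 1)
    (hq0 : 0 < q) (hq1 : q < 1) : qpInf z' q ≤ qpInf z q := by
  have hz'1 : z < 1 := lt_of_le_of_lt hzz hz1
  refine le_of_tendsto_of_tendsto' (tendsto_qp (hz0.trans hzz) hz1 hq0 hq1)
    (tendsto_qp hz0 hz'1 hq0 hq1) fun n => ?_
  refine Finset.prod_le_prod (fun k _ => (factor_pos (hz0.trans hzz) hz1 hq0 hq1 k).le)
    fun k _ => ?_
  have := (pow_pos hq0 k).le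
  nlinarith

/-- Gaussian q-binomial coefficient. -/
noncomputable def qbinom (q : ℝ) (n k : ℕ) : ℝ := qp q q n / (qp q q k * qp q q (n - k))
/-- `Δ_n = (pq^n;q)_∞ − (q^n;q)_∞`. -/
noncomputable def Δ (p q : ℝ) (n : ℕ) : ℝ := qpInf (p * q ^ n) q - qpInf (q ^ n) q
/-- The normalizing constant `C̃_n`. -/
noncomputable def Ct (p q : ℝ) (n : ℕ) : ℝ :=
  (-1) ^ n * q ^ ((n : ℝ) / 2 + 1 / 4) * Real.sqrt (qp p q (n + 1) / qp q q n) *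
    qpInf (p * q ^ (n + 1)) q / Real.sqrt (Δ p q n * Δ p q (n + 1))
/-- Coefficients `b̃_{k,n}` of the modified generalized Stieltjes–Wigert
orthonormal polynomials. -/
noncomputable def bt (p q : ℝ) (k n : ℕ) : ℝ :=
  Ct p q n * (-1) ^ k * qbinom q n k * (q ^ ((k : ℝ) ^ 2 + (k : ℝ) / 2) / qp p q k) *
    (1 - (1 - q ^ k) / (1 - p * q ^ k) * (qpInf (q ^ (n + 1)) q / qpInf (p * q ^ (n + 1)) q))
/-- The modified generalized Stieltjes–Wigert orthonormal polynomial
`P̃_n(x;p,q) = ∑_{k=0}^n b̃_{k,n} x^k`, for complex `x`. -/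
noncomputable def Pt (p q : ℝ) (n : ℕ) (x : ℂ) : ℂ :=
  ∑ k ∈ Finset.range (n + 1), ((bt p q k n : ℝ) : ℂ) * x ^ k

section main
variable {p q : ℝ} (hp0 : 0 ≤ p) (hp1 : p < 1) (hq0 : 0 < q) (hq1 : q < 1)
include hp0 hp1 hq0 hq1

lemma pq0 (n : ℕ) : 0 ≤ p * q ^ n := mul_nonneg hp0 (pow_pos hq0 n).le
lemma pq1 (n : ℕ) : p * q ^ n < 1 := zqm1 hp0 hp1 hq0 hq1 n
lemma qn0 (n : ℕ) : (0:ℝ) ≤ q ^ n := (pow_pos hq0 n).le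
lemma qn1 (n : ℕ) : q ^ (n+1) < 1 := by
  calc q ^ (n+1) ≤ q := pow_le_of_le_one hq0.le hq1.le (Nat.succ_ne_zero n)
    _ < 1 := hq1

/-- `Δ n / q^n → (1-p)/(1-q)` -/
lemma tendsto_u : Tendsto (fun n => Δ p q n / q ^ n) atTop (nhds ((1 - p) / (1 - q))) := by
  have hq' : (0:ℝ) < 1 - q := by linarith
  have hpow : Tendsto (fun n : ℕ => q ^ n) atTop (nhds 0) :=
    tendsto_pow_atTop_nhds_zero_of_lt_one hq0.le hq1
  have hlow : Tendsto (fun n : ℕ => (1 - p) / (1 - q) - q ^ n / (1 - q) ^ 2) atTop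
      (nhds ((1 - p) / (1 - q))) := by
    have := tendsto_const_nhds (x := (1 - p) / (1 - q)) (f := atTop (α := ℕ)) |>.sub
      ((hpow.div_const ((1 - q) ^ 2)))
    simpa using this
  have hhigh : Tendsto (fun n : ℕ => (1 - p) / (1 - q) + p ^ 2 * q ^ n / (1 - q) ^ 2) atTop
      (nhds ((1 - p) / (1 - q))) := by
    have := tendsto_const_nhds (x := (1 - p) / (1 - q)) (f := atTop (α := ℕ)) |>.add
      (((hpow.const_mul (p ^ 2)).div_const ((1 - q) ^ 2)))
    simpa using this
  refine tendsto_of_tendsto_of_tendsto_of_le_of_le' hlow hhigh ?_ ?_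
  · filter_upwards [eventually_ge_atTop 1] with n hn
    obtain ⟨m, rfl⟩ : ∃ m, n = m + 1 := ⟨n - 1, by omega⟩
    have h1 := (qpInf_bounds (pq0 hp0 hp1 hq0 hq1 (m+1)) (pq1 hp0 hp1 hq0 hq1 (m+1)) hq0 hq1).1
    have h2 := (qpInf_bounds (qn0 hp0 hp1 hq0 hq1 (m+1)) (qn1 hp0 hp1 hq0 hq1 m) hq0 hq1).2
    rw [Δ, le_div_iff₀ (pow_pos hq0 (m+1))]
    have e1 : ((1-p)/(1-q) - q^(m+1)/(1-q)^2) * q^(m+1)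
        = (1 - p * (q^(m+1)/(1-q))) - (1 - q^(m+1)/(1-q) + (q^(m+1)/(1-q))^2) := by
      field_simp
      ring
    have e2 : p * q^(m+1)/(1-q) = p * (q^(m+1)/(1-q)) := by ring
    rw [e1]
    rw [e2] at h1
    linarith
  · filter_upwards [eventually_ge_atTop 1] with n hn
    obtain ⟨m, rfl⟩ : ∃ m, n = m + 1 := ⟨n - 1, by omega⟩
    have h1 := (qpInf_bounds (pq0 hp0 hp1 hq0 hq1 (m+1)) (pq1 hp0 hp1 hq0 hq1 (m+1)) hq0 hq1).2
    have h2 := (qpInf_bounds (qn0 hp0 hp1 hq0 hq1 (m+1)) (qn1 hp0 hp1 hq0 hq1 m) hq0 hq1).1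
    rw [Δ, div_le_iff₀ (pow_pos hq0 (m+1))]
    have e1 : ((1-p)/(1-q) + p^2 * q^(m+1)/(1-q)^2) * q^(m+1)
        = (1 - p * (q^(m+1)/(1-q)) + (p * (q^(m+1)/(1-q)))^2) - (1 - q^(m+1)/(1-q)) := by
      field_simp
      ring
    have e2 : p * q^(m+1)/(1-q) = p * (q^(m+1)/(1-q)) := by ring
    rw [e1]
    rw [e2] at h1
    linarith

end main

section main2
variable {p q : ℝ} (hp0 : 0 ≤ p) (hp1 : p < 1) (hq0 : 0 < q) (hq1 : q < 1)
include hq0 hq1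

lemma tendsto_qpInf_one {w : ℕ → ℝ} (hw0 : ∀ n, 0 ≤ w n) (hw1 : ∀ n, w n < 1)
    (hw : Tendsto w atTop (nhds 0)) :
    Tendsto (fun n => qpInf (w n) q) atTop (nhds 1) := by
  have hq' : (0:ℝ) < 1 - q := by linarith
  have hlow : Tendsto (fun n => 1 - w n / (1 - q)) atTop (nhds 1) := by
    have := tendsto_const_nhds (x := (1:ℝ)) (f := atTop (α := ℕ)) |>.sub
      (hw.div_const (1 - q))
    simpa using this
  have hhigh : Tendsto (fun n => 1 - w n / (1 - q) + (w n / (1 - q)) ^ 2) atTop (nhds 1) := by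
    have := hlow.add (((hw.div_const (1 - q)).pow 2))
    simpa using this
  refine tendsto_of_tendsto_of_tendsto_of_le_of_le hlow hhigh ?_ ?_
  · exact fun n => (qpInf_bounds (hw0 n) (hw1 n) hq0 hq1).1
  · exact fun n => (qpInf_bounds (hw0 n) (hw1 n) hq0 hq1).2

include hp0 hp1

lemma tendsto_tail_p : Tendsto (fun n => qpInf (p * q ^ (n+1)) q) atTop (nhds 1) := by
  refine tendsto_qpInf_one hq0 hq1 (fun n => pq0 hp0 hp1 hq0 hq1 (n+1))
    (fun n => pq1 hp0 hp1 hq0 hq1 (n+1)) ?_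
  have := (tendsto_pow_atTop_nhds_zero_of_lt_one hq0.le hq1).comp
    (tendsto_add_atTop_nat 1) |>.const_mul p
  simpa [Function.comp] using this

lemma tendsto_tail_q : Tendsto (fun n => qpInf (q ^ (n+1)) q) atTop (nhds 1) := by
  refine tendsto_qpInf_one hq0 hq1 (fun n => qn0 hp0 hp1 hq0 hq1 (n+1))
    (fun n => qn1 hp0 hp1 hq0 hq1 n) ?_
  have := (tendsto_pow_atTop_nhds_zero_of_lt_one hq0.le hq1).comp
    (tendsto_add_atTop_nat 1)
  simpa [Function.comp_def] using this

/-- The limit of `(-1)^n q^(n/2) Ct n`. -/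
noncomputable def climit (p q : ℝ) : ℝ :=
  q ^ (-(1:ℝ) / 4) * ((1 - q) / (1 - p)) * Real.sqrt (qpInf p q / qpInf q q)

lemma tendsto_c :
    Tendsto (fun n : ℕ => (-1:ℝ) ^ n * q ^ ((n:ℝ) / 2) * Ct p q n) atTop
      (nhds (climit p q)) := by
  have hq' : (0:ℝ) < 1 - q := by linarith
  have hL : (0:ℝ) < (1 - p) / (1 - q) := div_pos (by linarith) hq'
  set L := (1 - p) / (1 - q) with hLdef
  set u : ℕ → ℝ := fun n => Δ p q n / q ^ n with hu
  have hu_t : Tendsto u atTop (nhds L) := tendsto_u hp0 hp1 hq0 hq1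
  have hu1_t : Tendsto (fun n => u (n+1)) atTop (nhds L) := hu_t.comp (tendsto_add_atTop_nat 1)
  -- the model sequence
  have hqpInfq_pos : 0 < qpInf q q := by
    have : qpInf q q = qpInf (q * q ^ 0) q := by norm_num
    rw [this]
    exact qpInf_pos (by positivity) (by simpa using zqm1 hq0.le hq1 hq0 hq1 0) hq0 hq1
  have hratio : Tendsto (fun n => qp p q (n+1) / qp q q n) atTop
      (nhds (qpInf p q / qpInf q q)) := by
    exact ((tendsto_qp hp0 hp1 hq0 hq1).comp (tendsto_add_atTop_nat 1)).div
      (tendsto_qp hq0.le hq1 hq0 hq1) hqpInfq_pos.ne'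
  have hsq : Tendsto (fun n => Real.sqrt (u n * u (n+1))) atTop (nhds L) := by
    have : Tendsto (fun n => u n * u (n+1)) atTop (nhds (L * L)) := hu_t.mul hu1_t
    have h2 := (Real.continuous_sqrt.tendsto (L * L)).comp this
    rwa [Real.sqrt_mul_self hL.le] at h2
  have hmodel : Tendsto (fun n => q ^ (-(1:ℝ)/4) * Real.sqrt (qp p q (n+1) / qp q q n) *
      qpInf (p * q ^ (n+1)) q / Real.sqrt (u n * u (n+1))) atTop (nhds (climit p q)) := by
    have h1 : Tendsto (fun n => Real.sqrt (qp p q (n+1) / qp q q n)) atTop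
        (nhds (Real.sqrt (qpInf p q / qpInf q q))) :=
      (Real.continuous_sqrt.tendsto _).comp hratio
    have h2 := ((h1.const_mul (q ^ (-(1:ℝ)/4))).mul
      (tendsto_tail_p hp0 hp1 hq0 hq1)).div hsq hL.ne'
    have heq : q ^ (-(1:ℝ)/4) * Real.sqrt (qpInf p q / qpInf q q) * 1 / L = climit p q := by
      rw [climit, hLdef]
      field_simp
    rw [← heq]
    exact h2
  -- eventual equality
  refine hmodel.congr' ?_
  have hev : ∀ᶠ n in atTop, 0 < u n ∧ 0 < u (n+1) := by
    filter_upwards [hu_t.eventually (eventually_gt_nhds hL) (p := fun y => 0 < y),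
      hu1_t.eventually (eventually_gt_nhds hL) (p := fun y => 0 < y)] with n h1 h2
    exact ⟨h1, h2⟩
  filter_upwards [hev] with n ⟨hun, hun1⟩
  symm
  have hqn : (0:ℝ) < q ^ n := pow_pos hq0 n
  have hqn1 : (0:ℝ) < q ^ (n+1) := pow_pos hq0 (n+1)
  have hΔn : Δ p q n = u n * q ^ n := by
    rw [hu]
    field_simp
  have hΔn1 : Δ p q (n+1) = u (n+1) * q ^ (n+1) := by
    rw [hu]
    field_simp
  rw [Ct, hΔn, hΔn1]
  have hsqrt : Real.sqrt (u n * q ^ n * (u (n+1) * q ^ (n+1)))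
      = Real.sqrt (u n * u (n+1)) * (q ^ n * Real.sqrt q) := by
    rw [show u n * q ^ n * (u (n+1) * q ^ (n+1)) = (u n * u (n+1)) * ((q ^ n) ^ 2 * q) by ring,
      Real.sqrt_mul (mul_nonneg hun.le hun1.le), Real.sqrt_mul (sq_nonneg (q ^ n)),
      Real.sqrt_sq hqn.le]
  rw [hsqrt]
  have hm : ((-1:ℝ)) ^ n * (-1) ^ n = 1 := by
    rw [← pow_add]
    exact Even.neg_one_pow ⟨n, rfl⟩
  have e2 : q ^ ((n:ℝ)/2) * q ^ ((n:ℝ)/2 + 1/4) = q ^ n * Real.sqrt q * q ^ (-(1:ℝ)/4) := by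
    rw [Real.sqrt_eq_rpow, ← Real.rpow_natCast q n, ← Real.rpow_add hq0, ← Real.rpow_add hq0,
      ← Real.rpow_add hq0]
    congr 1
    ring
  have hS : (0:ℝ) < Real.sqrt (u n * u (n+1)) := Real.sqrt_pos.2 (by positivity)
  have hsq : (0:ℝ) < Real.sqrt q := Real.sqrt_pos.2 hq0
  set B := Real.sqrt (qp p q (n + 1) / qp q q n)
  set C := qpInf (p * q ^ (n + 1)) q
  set S := Real.sqrt (u n * u (n+1))
  calc (-1:ℝ) ^ n * q ^ ((n:ℝ)/2) * ((-1) ^ n * q ^ ((n:ℝ)/2 + 1/4) * B * C / (S * (q ^ n * Real.sqrt q)))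
      = ((-1:ℝ) ^ n * (-1) ^ n) * ((q ^ ((n:ℝ)/2) * q ^ ((n:ℝ)/2 + 1/4)) * B * C / (S * (q ^ n * Real.sqrt q))) := by
        ring
    _ = (q ^ n * Real.sqrt q * q ^ (-(1:ℝ)/4)) * B * C / (S * (q ^ n * Real.sqrt q)) := by
        rw [hm, e2]; ring
    _ = q ^ (-(1:ℝ)/4) * B * C / S := by
        field_simp

end main2

section main3
variable {p q : ℝ} (hp0 : 0 ≤ p) (hp1 : p < 1) (hq0 : 0 < q) (hq1 : q < 1)
include hp0 hp1 hq0 hq1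

lemma qp_succ_id (k : ℕ) : (1 - p) * qp (p * q) q k = qp p q k * (1 - p * q ^ k) := by
  have h1 : qp p q (k+1) = qp p q k * (1 - p * q ^ k) := Finset.prod_range_succ _ _
  have h2 : qp p q (k+1) = (1 - p) * qp (p * q) q k := by
    rw [qp, Finset.prod_range_succ']
    simp only [pow_zero, mul_one]
    rw [mul_comm]
    congr 1
    rw [qp]
    refine Finset.prod_congr rfl fun j _ => ?_
    rw [pow_succ']
    ring
  rw [← h2, h1]

lemma pqk_pos (k : ℕ) : 0 < 1 - p * q ^ k := factor_pos hp0 hp1 hq0 hq1 k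

lemma ratio_mem (k : ℕ) : 0 ≤ (1 - q ^ k) / (1 - p * q ^ k) ∧
    (1 - q ^ k) / (1 - p * q ^ k) ≤ 1 := by
  have h1 : q ^ k ≤ 1 := pow_le_one₀ hq0.le hq1.le
  have h2 := pqk_pos hp0 hp1 hq0 hq1 k
  have h3 : p * q ^ k ≤ q ^ k := by nlinarith [pow_pos hq0 k]
  constructor
  · apply div_nonneg (by linarith) h2.le
  · rw [div_le_one h2]; linarith

lemma R_mem (n : ℕ) : 0 ≤ qpInf (q ^ (n+1)) q / qpInf (p * q ^ (n+1)) q ∧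
    qpInf (q ^ (n+1)) q / qpInf (p * q ^ (n+1)) q ≤ 1 := by
  have hzp0 := pq0 hp0 hp1 hq0 hq1 (n+1)
  have hzp1 := pq1 hp0 hp1 hq0 hq1 (n+1)
  have hz1 := qn1 hp0 hp1 hq0 hq1 n
  have hz0 := qn0 hp0 hp1 hq0 hq1 (n+1)
  have hppos := qpInf_pos hzp0 hzp1 hq0 hq1
  have hmono : qpInf (q ^ (n+1)) q ≤ qpInf (p * q ^ (n+1)) q := by
    refine qpInf_anti hzp0 ?_ hz1 hq0 hq1
    nlinarith [pow_pos hq0 (n+1)]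
  have hqpos := (qpInf_pos hz0 hz1 hq0 hq1)
  exact ⟨div_nonneg hqpos.le hppos.le, by rw [div_le_one hppos]; exact hmono⟩

lemma bracket_mem (n k : ℕ) :
    0 ≤ 1 - (1 - q ^ k) / (1 - p * q ^ k) * (qpInf (q ^ (n+1)) q / qpInf (p * q ^ (n+1)) q) ∧
    1 - (1 - q ^ k) / (1 - p * q ^ k) * (qpInf (q ^ (n+1)) q / qpInf (p * q ^ (n+1)) q) ≤ 1 := by
  obtain ⟨a0, a1⟩ := ratio_mem hp0 hp1 hq0 hq1 k
  obtain ⟨b0, b1⟩ := R_mem hp0 hp1 hq0 hq1 n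
  constructor
  · nlinarith
  · nlinarith

lemma qbinom_pos {n k : ℕ} (hkn : k ≤ n) : 0 < qbinom q n k := by
  have h := qp_pos hq0.le hq1 hq0 hq1
  exact div_pos (h n) (mul_pos (h k) (h (n - k)))

lemma qbinom_le {n k : ℕ} (hkn : k ≤ n) :
    qbinom q n k ≤ 1 / (qpInf q q * qpInf q q) := by
  have hqpos := qpInf_pos hq0.le hq1 hq0 hq1
  refine div_le_div₀ zero_le_one (qp_le_one hq0.le hq1 hq0 hq1 n)
    (by positivity) ?_
  exact mul_le_mul (qpInf_le_qp hq0.le hq1 hq0 hq1 k) (qpInf_le_qp hq0.le hq1 hq0 hq1 (n-k))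
    hqpos.le (qp_pos hq0.le hq1 hq0 hq1 k).le

lemma tendsto_qbinom (k : ℕ) :
    Tendsto (fun n => qbinom q n k) atTop (nhds (1 / qp q q k)) := by
  have hqpos := qpInf_pos hq0.le hq1 hq0 hq1
  have hkpos := qp_pos hq0.le hq1 hq0 hq1 k
  have h1 : Tendsto (fun n => qp q q (n - k)) atTop (nhds (qpInf q q)) :=
    (tendsto_qp hq0.le hq1 hq0 hq1).comp (tendsto_sub_atTop_nat k)
  have h2 : Tendsto (fun n => qbinom q n k) atTop
      (nhds (qpInf q q / (qp q q k * qpInf q q))) :=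
    (tendsto_qp hq0.le hq1 hq0 hq1).div (tendsto_const_nhds.mul h1)
      (by positivity)
  have : qpInf q q / (qp q q k * qpInf q q) = 1 / qp q q k := by
    field_simp
  rwa [this] at h2

lemma tendsto_bracket (k : ℕ) :
    Tendsto (fun n => 1 - (1 - q ^ k) / (1 - p * q ^ k) *
      (qpInf (q ^ (n+1)) q / qpInf (p * q ^ (n+1)) q)) atTop
      (nhds (1 - (1 - q ^ k) / (1 - p * q ^ k))) := by
  have h := (tendsto_tail_q hp0 hp1 hq0 hq1).div (tendsto_tail_p hp0 hp1 hq0 hq1) one_ne_zero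
  have h2 := tendsto_const_nhds (x := (1:ℝ)) (f := atTop (α := ℕ)) |>.sub
    ((h.const_mul ((1 - q ^ k) / (1 - p * q ^ k))))
  simpa using h2

lemma rpowE (k : ℕ) : q ^ ((k:ℝ) ^ 2 + (k:ℝ) / 2) = q ^ (k * k) * Real.sqrt q ^ k := by
  rw [Real.sqrt_eq_rpow, ← Real.rpow_natCast (q ^ ((1:ℝ)/2)) k, ← Real.rpow_natCast q (k*k),
    ← Real.rpow_mul hq0.le, ← Real.rpow_add hq0]
  congr 1
  push_cast
  ring

end main3

theorem stmt_19 (p q : ℝ) (hp0 : 0 ≤ p) (hp1 : p < 1) (hq0 : 0 < q) (hq1 : q < 1) (x : ℂ) :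
    Filter.Tendsto
      (fun n : ℕ => (-1 : ℂ) ^ n * ((q ^ ((n : ℝ) / 2) : ℝ) : ℂ) * Pt p q n x)
      Filter.atTop
      (nhds (((q ^ (-(1 : ℝ) / 4) * ((1 - q) / (1 - p)) *
          Real.sqrt (qpInf p q / qpInf q q) : ℝ) : ℂ) *
        ∑' k : ℕ, ((q ^ ((k : ℝ) ^ 2 + (k : ℝ) / 2) : ℝ) : ℂ) /
          ((qp (p * q) q k * qp q q k : ℝ) : ℂ) * (-(q : ℂ) * x) ^ k)) := by
  classical
  have hq' : (0:ℝ) < 1 - q := by linarith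
  have hp' : (0:ℝ) < 1 - p := by linarith
  have hIq : 0 < qpInf q q := qpInf_pos hq0.le hq1 hq0 hq1
  have hIp : 0 < qpInf p q := qpInf_pos hp0 hp1 hq0 hq1
  set cn : ℕ → ℝ := fun n => (-1:ℝ) ^ n * q ^ ((n:ℝ)/2) * Ct p q n with hcn
  have hcnt : Tendsto cn atTop (nhds (climit p q)) := tendsto_c hp0 hp1 hq0 hq1
  obtain ⟨M, hM⟩ : ∃ M : ℝ, ∀ n, |cn n| ≤ M := by
    obtain ⟨M, hM⟩ := hcnt.abs.bddAbove_range
    exact ⟨M, fun n => hM ⟨n, rfl⟩⟩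
  have hM0 : 0 ≤ M := (abs_nonneg _).trans (hM 0)
  set rest : ℕ → ℕ → ℝ := fun n k => (-1:ℝ) ^ k * qbinom q n k *
      (q ^ ((k:ℝ) ^ 2 + (k:ℝ)/2) / qp p q k) *
      (1 - (1 - q ^ k) / (1 - p * q ^ k) *
        (qpInf (q ^ (n+1)) q / qpInf (p * q ^ (n+1)) q)) with hrest
  set F : ℕ → ℕ → ℂ := fun n k =>
    if k ≤ n then ((cn n * rest n k : ℝ) : ℂ) * x ^ k else 0 with hF
  -- Claim A : LHS rewriting
  have claimA : ∀ n : ℕ, (-1 : ℂ) ^ n * ((q ^ ((n : ℝ) / 2) : ℝ) : ℂ) * Pt p q n x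
      = ∑' k, F n k := by
    intro n
    rw [show ∑' k, F n k = ∑ k ∈ Finset.range (n+1), F n k from
      tsum_eq_sum (fun k hk => if_neg (by simp only [Finset.mem_range] at hk; omega))]
    rw [Pt, Finset.mul_sum]
    refine Finset.sum_congr rfl fun k hk => ?_
    have hkn : k ≤ n := by simpa [Nat.lt_succ_iff] using hk
    rw [hF]
    simp only [if_pos hkn]
    have hre : cn n * rest n k = (-1:ℝ) ^ n * q ^ ((n:ℝ)/2) * bt p q k n := by
      rw [hcn, hrest, bt]
      ring
    rw [hre]
    push_cast
    ring
  -- limit of each column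
  set g : ℕ → ℂ := fun k => ((climit p q : ℝ) : ℂ) *
    (((q ^ ((k : ℝ) ^ 2 + (k : ℝ) / 2) : ℝ) : ℂ) /
      ((qp (p * q) q k * qp q q k : ℝ) : ℂ) * (-(q : ℂ) * x) ^ k) with hg
  have hab : ∀ k, Tendsto (F · k) atTop (nhds (g k)) := by
    intro k
    have hqpk := qp_pos hq0.le hq1 hq0 hq1 k
    have hppk := qp_pos hp0 hp1 hq0 hq1 k
    have hpqk := qp_pos (mul_nonneg hp0 hq0.le) (by nlinarith) hq0 hq1 k
    have h1pq := pqk_pos hp0 hp1 hq0 hq1 k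
    set restlim : ℝ := (-1:ℝ) ^ k * (1 / qp q q k) *
      (q ^ ((k:ℝ) ^ 2 + (k:ℝ)/2) / qp p q k) * (1 - (1 - q ^ k) / (1 - p * q ^ k)) with hrl
    have hr : Tendsto (fun n => rest n k) atTop (nhds restlim) := by
      rw [hrest, hrl]
      exact ((tendsto_const_nhds.mul (tendsto_qbinom hp0 hp1 hq0 hq1 k)).mul
        tendsto_const_nhds).mul (tendsto_bracket hp0 hp1 hq0 hq1 k)
    have hcomb : Tendsto (fun n => cn n * rest n k) atTop
        (nhds (climit p q * restlim)) := hcnt.mul hr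
    have hcast : Tendsto (fun n => ((cn n * rest n k : ℝ) : ℂ) * x ^ k) atTop
        (nhds (((climit p q * restlim : ℝ) : ℂ) * x ^ k)) :=
      ((Complex.continuous_ofReal.tendsto _).comp hcomb).mul_const _
    have hval : ((climit p q * restlim : ℝ) : ℂ) * x ^ k = g k := by
      have e : qp (p * q) q k = qp p q k * (1 - p * q ^ k) / (1 - p) := by
        rw [eq_div_iff hp'.ne']
        linear_combination qp_succ_id hp0 hp1 hq0 hq1 k
      have hrl2 : restlim = q ^ ((k:ℝ) ^ 2 + (k:ℝ)/2) / (qp (p * q) q k * qp q q k) *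
          ((-1:ℝ) ^ k * q ^ k) := by
        rw [hrl, e]
        have hi : (1 - q ^ k * p) * (1 - q ^ k * p)⁻¹ = 1 :=
          mul_inv_cancel₀ (by linarith [mul_comm p (q ^ k)])
        field_simp
        linear_combination -hi
      have hneg : (-(q:ℂ) * x) ^ k = (-1:ℂ) ^ k * (q:ℂ) ^ k * x ^ k := by
        rw [show -(q:ℂ) * x = (-1) * (q:ℂ) * x by ring, mul_pow, mul_pow]
      rw [hrl2]
      simp only [hg]
      rw [hneg]
      push_cast
      ring
    rw [← hval]
    refine hcast.congr' ?_
    filter_upwards [eventually_ge_atTop k] with n hn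
    rw [hF]
    simp only [if_pos hn]
  -- the domination bound
  set A : ℝ := M / (qpInf q q * qpInf q q * qpInf p q) with hA
  have hA0 : 0 ≤ A := by positivity
  set bound : ℕ → ℝ := fun k => A * (q ^ (k * k) * (Real.sqrt q * ‖x‖) ^ k) with hbound
  have hbound0 : ∀ k, 0 ≤ bound k := by
    intro k
    have := Real.sqrt_nonneg q
    positivity
  have h_sum : Summable bound := by
    refine summable_of_ratio_norm_eventually_le (r := 1/2) (by norm_num) ?_
    have ht : Tendsto (fun k : ℕ => (q ^ 2) ^ k * (q * (Real.sqrt q * ‖x‖))) atTop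
        (nhds 0) := by
      have := (tendsto_pow_atTop_nhds_zero_of_lt_one (by positivity)
        (by nlinarith : q ^ 2 < 1)).mul_const (q * (Real.sqrt q * ‖x‖))
      simpa using this
    filter_upwards [ht.eventually (eventually_le_nhds (by norm_num : (0:ℝ) < 1/2))]
      with k hk
    have hterm0 : (0:ℝ) ≤ (q ^ 2) ^ k * (q * (Real.sqrt q * ‖x‖)) := by
      have := Real.sqrt_nonneg q
      positivity
    rw [Real.norm_eq_abs, Real.norm_eq_abs, abs_of_nonneg (hbound0 _),
      abs_of_nonneg (hbound0 _)]
    have he : bound (k+1) = ((q ^ 2) ^ k * (q * (Real.sqrt q * ‖x‖))) * bound k := by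
      rw [hbound]
      simp only
      rw [show (k+1) * (k+1) = k * k + 2 * k + 1 by ring, pow_add, pow_add, pow_mul, pow_succ]
      ring
    rw [he]
    have hb := hbound0 k
    nlinarith
  have h_bound : ∀ᶠ n in atTop, ∀ k, ‖F n k‖ ≤ bound k := by
    refine Eventually.of_forall fun n k => ?_
    rw [hF]
    by_cases hkn : k ≤ n
    · simp only [if_pos hkn]
      have hqpk := qp_pos hq0.le hq1 hq0 hq1 k
      have hppk := qp_pos hp0 hp1 hq0 hq1 k
      have hE : (0:ℝ) < q ^ ((k:ℝ) ^ 2 + (k:ℝ)/2) := Real.rpow_pos_of_pos hq0 _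
      obtain ⟨hbr0, hbr1⟩ := bracket_mem hp0 hp1 hq0 hq1 n k
      have hqb0 := qbinom_pos hp0 hp1 hq0 hq1 (n := n) (k := k) hkn
      have hqble := qbinom_le hp0 hp1 hq0 hq1 (n := n) (k := k) hkn
      have hrabs : |rest n k| = qbinom q n k * (q ^ ((k:ℝ) ^ 2 + (k:ℝ)/2) / qp p q k) *
          (1 - (1 - q ^ k) / (1 - p * q ^ k) *
            (qpInf (q ^ (n+1)) q / qpInf (p * q ^ (n+1)) q)) := by
        rw [hrest]
        simp only
        rw [abs_mul, abs_mul, abs_mul, abs_pow, abs_neg, abs_one, one_pow, one_mul,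
          abs_of_nonneg hqb0.le, abs_of_nonneg (by positivity), abs_of_nonneg hbr0]
      have hd : q ^ ((k:ℝ) ^ 2 + (k:ℝ)/2) / qp p q k
          ≤ q ^ ((k:ℝ) ^ 2 + (k:ℝ)/2) / qpInf p q :=
        div_le_div_of_nonneg_left hE.le hIp (qpInf_le_qp hp0 hp1 hq0 hq1 k)
      have hrle : |rest n k| ≤ 1 / (qpInf q q * qpInf q q) *
          (q ^ ((k:ℝ) ^ 2 + (k:ℝ)/2) / qpInf p q) := by
        rw [hrabs]
        calc qbinom q n k * (q ^ ((k:ℝ) ^ 2 + (k:ℝ)/2) / qp p q k) * _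
            ≤ qbinom q n k * (q ^ ((k:ℝ) ^ 2 + (k:ℝ)/2) / qp p q k) * 1 := by
              refine mul_le_mul_of_nonneg_left hbr1 (by positivity)
          _ = qbinom q n k * (q ^ ((k:ℝ) ^ 2 + (k:ℝ)/2) / qp p q k) := mul_one _
          _ ≤ 1 / (qpInf q q * qpInf q q) * (q ^ ((k:ℝ) ^ 2 + (k:ℝ)/2) / qpInf p q) :=
              mul_le_mul hqble hd (by positivity) (by positivity)
      rw [norm_mul, norm_pow, Complex.norm_real, Real.norm_eq_abs, abs_mul]
      have hx0 : (0:ℝ) ≤ ‖x‖ ^ k := by positivity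
      have hstep : |cn n| * |rest n k| ≤ M * (1 / (qpInf q q * qpInf q q) *
          (q ^ ((k:ℝ) ^ 2 + (k:ℝ)/2) / qpInf p q)) :=
        mul_le_mul (hM n) hrle (abs_nonneg _) hM0
      calc |cn n| * |rest n k| * ‖x‖ ^ k
          ≤ (M * (1 / (qpInf q q * qpInf q q) *
              (q ^ ((k:ℝ) ^ 2 + (k:ℝ)/2) / qpInf p q))) * ‖x‖ ^ k :=
            mul_le_mul_of_nonneg_right hstep hx0
        _ = bound k := by
            rw [hbound]
            simp only
            rw [rpowE hp0 hp1 hq0 hq1 k, hA, mul_pow]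
            field_simp
    · simp only [if_neg hkn, norm_zero]
      exact hbound0 k
  have h := tendsto_tsum_of_dominated_convergence h_sum hab h_bound
  have hgs : ∑' k, g k = ((climit p q : ℝ) : ℂ) *
      ∑' k : ℕ, ((q ^ ((k : ℝ) ^ 2 + (k : ℝ) / 2) : ℝ) : ℂ) /
        ((qp (p * q) q k * qp q q k : ℝ) : ℂ) * (-(q : ℂ) * x) ^ k := by
    rw [hg, tsum_mul_left]
  have hfinal : Tendsto (fun n => ∑' k, F n k) atTop (nhds (∑' k, g k)) := h
  rw [hgs] at hfinal
  have : climit p q = q ^ (-(1 : ℝ) / 4) * ((1 - q) / (1 - p)) *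
      Real.sqrt (qpInf p q / qpInf q q) := rfl
  rw [this] at hfinal
  exact hfinal.congr fun n => (claimA n).symm
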